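/- For every d ≥ 1 and all d×d complex unitary matrices U and V, one has | |Tr(UᵀU)|²/d² − |Tr(VᵀV)|²/d² | ≤ (4/√d)·‖U − V‖₂; that is, the function U ↦ |Tr(UᵀU)|²/d² on the unitary group is Lipschitz with constant 4/√d with respect to the Hilbert–Schmidt norm. -/

import Mathlib

open Matrix

noncomputable section

/-- The Hilbert–Schmidt (Frobenius) norm of a complex matrix: `‖A‖₂ = √(Tr(A†A))`. -/
def hsNorm {d : ℕ} (A : Matrix (Fin d) (Fin d) ℂ) : ℝ :=
  Real.sqrt ((Aᴴ * A).trace).re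


lemma hs_trace_re {d : ℕ} (A : Matrix (Fin d) (Fin d) ℂ) :
    ((Aᴴ * A).trace).re = ∑ p : Fin d × Fin d, ‖A p.1 p.2‖ ^ 2 := by
  rw [Fintype.sum_prod_type]
  simp only [Matrix.trace, Matrix.diag, Matrix.mul_apply, Matrix.conjTranspose_apply,
    Complex.re_sum]
  rw [Finset.sum_comm]
  congr 1; ext i; congr 1; ext j
  have : star (A i j) * A i j = ((‖A i j‖ ^ 2 : ℝ) : ℂ) := by
    rw [Complex.star_def, ← Complex.normSq_eq_conj_mul_self, Complex.normSq_eq_norm_sq]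
  rw [this, Complex.ofReal_re]

lemma hs_cs {d : ℕ} (A B : Matrix (Fin d) (Fin d) ℂ) :
    ‖(Aᴴ * B).trace‖ ≤ hsNorm A * hsNorm B := by
  set x : EuclideanSpace ℂ (Fin d × Fin d) := WithLp.toLp 2 (fun p : Fin d × Fin d => A p.1 p.2) with hxdef
  set y : EuclideanSpace ℂ (Fin d × Fin d) := WithLp.toLp 2 (fun p : Fin d × Fin d => B p.1 p.2) with hydef
  have hx : hsNorm A = ‖x‖ := by
    rw [hsNorm, hs_trace_re, EuclideanSpace.norm_eq]
  have hy : hsNorm B = ‖y‖ := by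
    rw [hsNorm, hs_trace_re, EuclideanSpace.norm_eq]
  have hinner : (inner ℂ x y : ℂ) = (Aᴴ * B).trace := by
    rw [PiLp.inner_apply, Fintype.sum_prod_type]
    simp only [RCLike.inner_apply, Matrix.trace, Matrix.diag, Matrix.mul_apply,
      Matrix.conjTranspose_apply]
    rw [Finset.sum_comm]
    exact Finset.sum_congr rfl fun i _ => Finset.sum_congr rfl fun j _ => mul_comm _ _
  calc ‖(Aᴴ * B).trace‖ = ‖(inner ℂ x y : ℂ)‖ := by
        rw [hinner]
    _ ≤ ‖x‖ * ‖y‖ := norm_inner_le_norm x y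
    _ = hsNorm A * hsNorm B := by rw [hx, hy]

lemma hsNorm_nonneg {d : ℕ} (A : Matrix (Fin d) (Fin d) ℂ) : 0 ≤ hsNorm A :=
  Real.sqrt_nonneg _

lemma hsNorm_map_conj {d : ℕ} (A : Matrix (Fin d) (Fin d) ℂ) :
    hsNorm (A.map (starRingEnd ℂ)) = hsNorm A := by
  rw [hsNorm, hsNorm, hs_trace_re, hs_trace_re]
  simp [Matrix.map_apply]

lemma conjTranspose_map_conj {d : ℕ} (A : Matrix (Fin d) (Fin d) ℂ) :
    (A.map (starRingEnd ℂ))ᴴ = Aᵀ := by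
  ext i j
  simp [Matrix.conjTranspose_apply, Matrix.map_apply]

lemma hsNorm_unitary {d : ℕ} (U : Matrix (Fin d) (Fin d) ℂ)
    (hU : U ∈ Matrix.unitaryGroup (Fin d) ℂ) : hsNorm U = Real.sqrt d := by
  rw [hsNorm]
  have h1 : Uᴴ * U = 1 := by
    have := hU.1
    rwa [Matrix.star_eq_conjTranspose] at this
  rw [h1]
  simp [Matrix.trace_one]

lemma tr_tu_le {d : ℕ} (U A : Matrix (Fin d) (Fin d) ℂ)
    (hU : U ∈ Matrix.unitaryGroup (Fin d) ℂ) :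
    ‖(Uᵀ * A).trace‖ ≤ Real.sqrt d * hsNorm A := by
  have := hs_cs (U.map (starRingEnd ℂ)) A
  rwa [conjTranspose_map_conj, hsNorm_map_conj, hsNorm_unitary U hU] at this

/-- **Lipschitz continuity of the normalized IGP functional.**
For all `d ≥ 1` and unitaries `U, V`,
`| |Tr(UᵀU)|²/d² − |Tr(VᵀV)|²/d² | ≤ (4/√d)·‖U − V‖₂`. -/
theorem normIGP_lipschitz
    (d : ℕ) (hd : 1 ≤ d)
    (U V : Matrix (Fin d) (Fin d) ℂ)
    (hU : U ∈ Matrix.unitaryGroup (Fin d) ℂ)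
    (hV : V ∈ Matrix.unitaryGroup (Fin d) ℂ) :
    |‖(Uᵀ * U).trace‖ ^ 2 / (d : ℝ) ^ 2 -
        ‖(Vᵀ * V).trace‖ ^ 2 / (d : ℝ) ^ 2| ≤
      4 / Real.sqrt d * hsNorm (U - V) := by
  set a := ‖(Uᵀ * U).trace‖ with ha
  set b := ‖(Vᵀ * V).trace‖ with hb
  set h := hsNorm (U - V) with hh
  have hdpos : (0:ℝ) < d := by exact_mod_cast hd
  have hspos : 0 < Real.sqrt d := Real.sqrt_pos.mpr hdpos
  have hsq : Real.sqrt d * Real.sqrt d = d := Real.mul_self_sqrt hdpos.le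
  have ha0 : 0 ≤ a := norm_nonneg _
  have hb0 : 0 ≤ b := norm_nonneg _
  have hh0 : 0 ≤ h := hsNorm_nonneg _
  -- bounds a,b ≤ d
  have haU : a ≤ (d:ℝ) := by
    have := tr_tu_le U U hU
    rwa [hsNorm_unitary U hU, hsq] at this
  have hbV : b ≤ (d:ℝ) := by
    have := tr_tu_le V V hV
    rwa [hsNorm_unitary V hV, hsq] at this
  -- |a - b| ≤ 2 √d h
  have hab : |a - b| ≤ 2 * Real.sqrt d * h := by
    have hsplit : (Uᵀ * U).trace - (Vᵀ * V).trace
        = (Uᵀ * (U - V)).trace + ((U - V)ᵀ * V).trace := by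
      have e : Uᵀ * (U - V) + (U - V)ᵀ * V = Uᵀ * U - Vᵀ * V := by
        rw [Matrix.transpose_sub, Matrix.mul_sub, Matrix.sub_mul]
        noncomm_ring
      rw [← Matrix.trace_add, e, Matrix.trace_sub]
    have h1 : ‖(Uᵀ * (U - V)).trace‖ ≤ Real.sqrt d * h :=
      tr_tu_le U (U - V) hU
    have h2 : ‖((U - V)ᵀ * V).trace‖ ≤ Real.sqrt d * h := by
      have := hs_cs ((U - V).map (starRingEnd ℂ)) V
      rw [conjTranspose_map_conj, hsNorm_map_conj, hsNorm_unitary V hV] at this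
      calc ‖((U - V)ᵀ * V).trace‖ ≤ h * Real.sqrt d := this
        _ = Real.sqrt d * h := mul_comm _ _
    calc |a - b| ≤ ‖(Uᵀ * U).trace - (Vᵀ * V).trace‖ :=
          abs_norm_sub_norm_le _ _
      _ = ‖(Uᵀ * (U - V)).trace + ((U - V)ᵀ * V).trace‖ := by rw [hsplit]
      _ ≤ ‖(Uᵀ * (U - V)).trace‖ + ‖((U - V)ᵀ * V).trace‖ :=
          norm_add_le _ _
      _ ≤ Real.sqrt d * h + Real.sqrt d * h := add_le_add h1 h2
      _ = 2 * Real.sqrt d * h := by ring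
  -- finish
  have key : |a - b| * (a + b) ≤ (2 * Real.sqrt d * h) * (2 * d) :=
    mul_le_mul hab (by linarith) (by linarith) (by positivity)
  have hrw : 4 / Real.sqrt d * h * (d:ℝ) ^ 2 = 2 * Real.sqrt d * h * (2 * d) := by
    field_simp
    linear_combination (-(4 * h)) * hsq
  rw [div_sub_div_same, abs_div, abs_of_pos (by positivity : (0:ℝ) < (d:ℝ)^2),
    div_le_iff₀ (by positivity : (0:ℝ) < (d:ℝ)^2), hrw]
  calc |a ^ 2 - b ^ 2| = |(a - b) * (a + b)| := by congr 1; ring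
    _ = |a - b| * |a + b| := abs_mul _ _
    _ = |a - b| * (a + b) := by rw [abs_of_nonneg (add_nonneg ha0 hb0)]
    _ ≤ 2 * Real.sqrt d * h * (2 * d) := key
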